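/- The function K defined on (0, ∞) by K(x) = (√π/2) · (e^{−x²}/x) · erfi(x) tends to 0 as x tends to +∞. -/

import Mathlib

open Real Filter

/-- The imaginary error function `erfi x = (2/√π) ∫₀ˣ e^{t²} dt`. -/
noncomputable def erfi (x : ℝ) : ℝ :=
  (2 / Real.sqrt π) * ∫ t in (0:ℝ)..x, Real.exp (t ^ 2)

/-- `K x = (√π/2) · (e^{−x²}/x) · erfi x`. -/
noncomputable def K (x : ℝ) : ℝ :=
  (Real.sqrt π / 2) * (Real.exp (-x ^ 2) / x) * erfi x

lemma exp_sq_intervalIntegrable (a b : ℝ) :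
    IntervalIntegrable (fun t : ℝ => Real.exp (t ^ 2)) MeasureTheory.volume a b :=
  (Real.continuous_exp.comp (continuous_pow 2)).intervalIntegrable a b

lemma K_eq (x : ℝ) :
    K x = (Real.exp (-x ^ 2) / x) * ∫ t in (0:ℝ)..x, Real.exp (t ^ 2) := by
  have h : Real.sqrt π ≠ 0 := ne_of_gt (Real.sqrt_pos.mpr Real.pi_pos)
  have h1 : (Real.sqrt π / 2) * (2 / Real.sqrt π) = 1 := by field_simp
  unfold K erfi
  calc (Real.sqrt π / 2) * (Real.exp (-x ^ 2) / x) * ((2 / Real.sqrt π) * ∫ t in (0:ℝ)..x, Real.exp (t ^ 2))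
      = ((Real.sqrt π / 2) * (2 / Real.sqrt π)) * ((Real.exp (-x ^ 2) / x) * ∫ t in (0:ℝ)..x, Real.exp (t ^ 2)) := by ring
    _ = (Real.exp (-x ^ 2) / x) * ∫ t in (0:ℝ)..x, Real.exp (t ^ 2) := by rw [h1]; ring

lemma integral_exp_sq_le (x : ℝ) (hx : 1 ≤ x) :
    (∫ t in (0:ℝ)..x, Real.exp (t ^ 2)) ≤ Real.exp (x ^ 2) := by
  have hsplit : (∫ t in (0:ℝ)..1, Real.exp (t ^ 2)) + (∫ t in (1:ℝ)..x, Real.exp (t ^ 2))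
      = ∫ t in (0:ℝ)..x, Real.exp (t ^ 2) :=
    intervalIntegral.integral_add_adjacent_intervals
      (exp_sq_intervalIntegrable 0 1) (exp_sq_intervalIntegrable 1 x)
  have h1 : (∫ t in (0:ℝ)..1, Real.exp (t ^ 2)) ≤ Real.exp 1 := by
    calc (∫ t in (0:ℝ)..1, Real.exp (t ^ 2))
        ≤ ∫ _ in (0:ℝ)..1, Real.exp 1 := by
          apply intervalIntegral.integral_mono_on (by norm_num)
            (exp_sq_intervalIntegrable 0 1) (intervalIntegrable_const)
          intro t ht
          apply Real.exp_le_exp.mpr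
          nlinarith [ht.1, ht.2]
      _ = Real.exp 1 := by simp
  have h2 : (∫ t in (1:ℝ)..x, Real.exp (t ^ 2)) ≤ Real.exp (x ^ 2) - Real.exp 1 := by
    have hderiv : ∀ t ∈ Set.uIcc (1:ℝ) x,
        HasDerivAt (fun s : ℝ => Real.exp (s ^ 2)) (2 * t * Real.exp (t ^ 2)) t := by
      intro t _
      have h1 : HasDerivAt (fun s : ℝ => s ^ 2) (2 * t) t := by
        simpa using (hasDerivAt_pow 2 t)
      convert h1.exp using 1; ring
    have hint : IntervalIntegrable (fun t : ℝ => 2 * t * Real.exp (t ^ 2))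
        MeasureTheory.volume 1 x :=
      (((continuous_const.mul continuous_id).mul
        (Real.continuous_exp.comp (continuous_pow 2))).intervalIntegrable 1 x)
    have heq : (∫ t in (1:ℝ)..x, 2 * t * Real.exp (t ^ 2))
        = Real.exp (x ^ 2) - Real.exp 1 := by
      have := intervalIntegral.integral_eq_sub_of_hasDerivAt hderiv hint
      simpa using this
    calc (∫ t in (1:ℝ)..x, Real.exp (t ^ 2))
        ≤ ∫ t in (1:ℝ)..x, 2 * t * Real.exp (t ^ 2) := by
          apply intervalIntegral.integral_mono_on hx (exp_sq_intervalIntegrable 1 x) hint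
          intro t ht
          nlinarith [Real.exp_pos (t ^ 2), ht.1]
      _ = Real.exp (x ^ 2) - Real.exp 1 := heq
  linarith

/-- `K(x) → 0` as `x → +∞`. -/
theorem K_tendsto_zero : Tendsto K atTop (nhds 0) := by
  refine squeeze_zero' ?_ ?_ (tendsto_inv_atTop_zero : Tendsto (fun x : ℝ => x⁻¹) atTop (nhds 0))
  · filter_upwards [eventually_ge_atTop (1:ℝ)] with x hx
    rw [K_eq]
    have hx0 : 0 < x := lt_of_lt_of_le one_pos hx
    have hint : 0 ≤ ∫ t in (0:ℝ)..x, Real.exp (t ^ 2) :=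
      intervalIntegral.integral_nonneg hx0.le (fun t _ => (Real.exp_pos _).le)
    positivity
  · filter_upwards [eventually_ge_atTop (1:ℝ)] with x hx
    rw [K_eq]
    have hx0 : 0 < x := lt_of_lt_of_le one_pos hx
    have h := integral_exp_sq_le x hx
    have hint : 0 ≤ ∫ t in (0:ℝ)..x, Real.exp (t ^ 2) :=
      intervalIntegral.integral_nonneg hx0.le (fun t _ => (Real.exp_pos _).le)
    have hkey : Real.exp (-x ^ 2) / x * ∫ t in (0:ℝ)..x, Real.exp (t ^ 2)
        ≤ Real.exp (-x ^ 2) / x * Real.exp (x ^ 2) := by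
      apply mul_le_mul_of_nonneg_left h (by positivity)
    calc Real.exp (-x ^ 2) / x * ∫ t in (0:ℝ)..x, Real.exp (t ^ 2)
        ≤ Real.exp (-x ^ 2) / x * Real.exp (x ^ 2) := hkey
      _ = x⁻¹ := by
          rw [div_mul_eq_mul_div, ← Real.exp_add]
          simp [one_div]
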